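/- For n_1 > n_2 + 1 ≥ κ + 1, the least eigenvalue of the complement of B_1(n_1,n_2;κ) is strictly greater than the least eigenvalue of the complement of B_1(n_1−1,n_2+1;κ). Consequently, among all B_1(n_1,n_2;κ) with n_1+n_2 = n fixed and n_1 ≥ n_2 ≥ κ, the least eigenvalue of the complement is minimized at (n_1,n_2) = (⌈n/2⌉, ⌊n/2⌋). -/

import Mathlib

open Classical in
/-- The adjacency matrix of a simple graph, with real entries. -/
noncomputable def adjMat {V : Type*} [Fintype V] (G : SimpleGraph V) : Matrix V V ℝ :=
  Matrix.of fun u v => if G.Adj u v then 1 else 0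

/-- The least eigenvalue of a real matrix. -/
noncomputable def minEig {V : Type*} [Fintype V] (A : Matrix V V ℝ) : ℝ :=
  sInf {μ : ℝ | ∃ x : V → ℝ, x ≠ 0 ∧ A.mulVec x = μ • x}

/-- `B1 n1 n2 κ` is the graph obtained from disjoint complete graphs `K_{n1}` and
`K_{n2}` by adding `κ` edges forming a matching between them (the `i`-th vertex of the
first clique is matched to the `i`-th vertex of the second, for `i < κ`). -/
def B1 (n1 n2 κ : ℕ) : SimpleGraph (Fin n1 ⊕ Fin n2) where
  Adj u v :=
    Sum.elim
      (fun a : Fin n1 => Sum.elim (fun b : Fin n1 => a ≠ b) (fun b : Fin n2 => (a : ℕ) = (b : ℕ) ∧ (a : ℕ) < κ) v)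
      (fun a : Fin n2 => Sum.elim (fun b : Fin n1 => (b : ℕ) = (a : ℕ) ∧ (b : ℕ) < κ) (fun b : Fin n2 => a ≠ b) v) u
  symm := by
    constructor
    rintro (a | a) (b | b) h
    · exact h.symm
    · exact h
    · exact h
    · exact h.symm
  loopless := by constructor; rintro (a | a) h <;> exact h rfl

lemma sum_except {m κ : ℕ} (hκ : κ ≤ m) (i : ℕ) (f : Fin m → ℝ) :
    ∑ j : Fin m, (if (i = (j:ℕ) ∧ i < κ) then (0:ℝ) else 1) * f j
      = (∑ j, f j) - (if h : i < κ then f ⟨i, lt_of_lt_of_le h hκ⟩ else 0) := by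
  by_cases hi : i < κ
  · rw [dif_pos hi]
    have key : ∀ j : Fin m, (if (i = (j:ℕ) ∧ i < κ) then (0:ℝ) else 1) * f j
        = f j - (if (⟨i, lt_of_lt_of_le hi hκ⟩ : Fin m) = j then f j else 0) := by
      intro j
      by_cases h : (⟨i, lt_of_lt_of_le hi hκ⟩ : Fin m) = j
      · rw [if_pos h, if_pos ⟨by rw [← h], hi⟩]; ring
      · rw [if_neg h, if_neg (fun hc : i = (j:ℕ) ∧ i < κ => h (Fin.ext hc.1))]; ring
    rw [Finset.sum_congr rfl (fun j _ => key j), Finset.sum_sub_distrib,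
      Finset.sum_ite_eq Finset.univ (⟨i, lt_of_lt_of_le hi hκ⟩ : Fin m) f,
      if_pos (Finset.mem_univ _)]
  · rw [dif_neg hi]
    simp [hi]

lemma sum_except' {m κ : ℕ} (hκ : κ ≤ m) (i : ℕ) (f : Fin m → ℝ) :
    ∑ j : Fin m, (if ((j:ℕ) = i ∧ (j:ℕ) < κ) then (0:ℝ) else 1) * f j
      = (∑ j, f j) - (if h : i < κ then f ⟨i, lt_of_lt_of_le h hκ⟩ else 0) := by
  by_cases hi : i < κ
  · rw [dif_pos hi]
    have key : ∀ j : Fin m, (if ((j:ℕ) = i ∧ (j:ℕ) < κ) then (0:ℝ) else 1) * f j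
        = f j - (if (⟨i, lt_of_lt_of_le hi hκ⟩ : Fin m) = j then f j else 0) := by
      intro j
      by_cases h : (⟨i, lt_of_lt_of_le hi hκ⟩ : Fin m) = j
      · rw [if_pos h, if_pos ⟨by rw [← h], by rw [← h]; exact hi⟩]; ring
      · rw [if_neg h, if_neg (fun hc : (j:ℕ) = i ∧ (j:ℕ) < κ => h (Fin.ext hc.1.symm))]; ring
    rw [Finset.sum_congr rfl (fun j _ => key j), Finset.sum_sub_distrib,
      Finset.sum_ite_eq Finset.univ (⟨i, lt_of_lt_of_le hi hκ⟩ : Fin m) f,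
      if_pos (Finset.mem_univ _)]
  · rw [dif_neg hi]
    have : ∀ j : Fin m, ¬ ((j:ℕ) = i ∧ (j:ℕ) < κ) := fun j hc => hi (hc.1 ▸ hc.2)
    simp [this]


lemma B1_adj_ll {n1 n2 κ : ℕ} (u w : Fin n1) : (B1 n1 n2 κ).Adj (.inl u) (.inl w) ↔ u ≠ w := by
  simp [B1, Functor.map, Sum.bind, Fin.ext_iff]
lemma B1_adj_rr {n1 n2 κ : ℕ} (u w : Fin n2) : (B1 n1 n2 κ).Adj (.inr u) (.inr w) ↔ u ≠ w := by
  simp [B1, Functor.map, Sum.bind, Fin.ext_iff]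
lemma B1_adj_lr {n1 n2 κ : ℕ} (u : Fin n1) (w : Fin n2) :
    (B1 n1 n2 κ).Adj (.inl u) (.inr w) ↔ ((u:ℕ) = (w:ℕ) ∧ (u:ℕ) < κ) := by
  simp [B1, Functor.map, Sum.bind, Fin.ext_iff]
lemma B1_adj_rl {n1 n2 κ : ℕ} (u : Fin n2) (w : Fin n1) :
    (B1 n1 n2 κ).Adj (.inr u) (.inl w) ↔ ((w:ℕ) = (u:ℕ) ∧ (w:ℕ) < κ) := by
  simp [B1, Functor.map, Sum.bind, Fin.ext_iff]

lemma adj_ll {n1 n2 κ : ℕ} (u w : Fin n1) :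
    adjMat ((B1 n1 n2 κ)ᶜ) (.inl u) (.inl w) = 0 := by
  have h : ¬ ((B1 n1 n2 κ)ᶜ).Adj (.inl u) (.inl w) := by
    rw [SimpleGraph.compl_adj, B1_adj_ll]
    rintro ⟨h1, h2⟩
    exact h2 (fun he => h1 (congrArg _ he))
  simp [adjMat, h]

lemma adj_rr {n1 n2 κ : ℕ} (u w : Fin n2) :
    adjMat ((B1 n1 n2 κ)ᶜ) (.inr u) (.inr w) = 0 := by
  have h : ¬ ((B1 n1 n2 κ)ᶜ).Adj (.inr u) (.inr w) := by
    rw [SimpleGraph.compl_adj, B1_adj_rr]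
    rintro ⟨h1, h2⟩
    exact h2 (fun he => h1 (congrArg _ he))
  simp [adjMat, h]

lemma adj_lr {n1 n2 κ : ℕ} (u : Fin n1) (j : Fin n2) :
    adjMat ((B1 n1 n2 κ)ᶜ) (.inl u) (.inr j)
      = if ((u:ℕ) = (j:ℕ) ∧ (u:ℕ) < κ) then 0 else 1 := by
  have hadj : ((B1 n1 n2 κ)ᶜ).Adj (.inl u) (.inr j) ↔ ¬ ((u:ℕ) = (j:ℕ) ∧ (u:ℕ) < κ) := by
    rw [SimpleGraph.compl_adj, B1_adj_lr]
    exact ⟨fun h => h.2, fun h => ⟨by simp, h⟩⟩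
  by_cases h : (u:ℕ) = (j:ℕ) ∧ (u:ℕ) < κ
  · have hj : (j:ℕ) < κ := h.1 ▸ h.2
    simp [adjMat, hadj, h, hj]
  · simp [adjMat, hadj, h]

lemma adj_rl {n1 n2 κ : ℕ} (v : Fin n2) (u : Fin n1) :
    adjMat ((B1 n1 n2 κ)ᶜ) (.inr v) (.inl u)
      = if ((u:ℕ) = (v:ℕ) ∧ (u:ℕ) < κ) then 0 else 1 := by
  have hadj : ((B1 n1 n2 κ)ᶜ).Adj (.inr v) (.inl u) ↔ ¬ ((u:ℕ) = (v:ℕ) ∧ (u:ℕ) < κ) := by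
    rw [SimpleGraph.compl_adj, B1_adj_rl]
    exact ⟨fun h => h.2, fun h => ⟨by simp, h⟩⟩
  by_cases h : (u:ℕ) = (v:ℕ) ∧ (u:ℕ) < κ
  · have hv : (v:ℕ) < κ := h.1 ▸ h.2
    simp [adjMat, hadj, h, hv]
  · simp [adjMat, hadj, h]

lemma mulVec_inl {n1 n2 κ : ℕ} (hκ2 : κ ≤ n2) (x : Fin n1 ⊕ Fin n2 → ℝ) (u : Fin n1) :
    (adjMat ((B1 n1 n2 κ)ᶜ)).mulVec x (.inl u)
      = (∑ j : Fin n2, x (.inr j))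
        - (if h : (u:ℕ) < κ then x (.inr ⟨u, lt_of_lt_of_le h hκ2⟩) else 0) := by
  simp only [Matrix.mulVec, dotProduct, Fintype.sum_sum_type]
  have h1 : ∀ w : Fin n1, adjMat ((B1 n1 n2 κ)ᶜ) (.inl u) (.inl w) * x (.inl w) = 0 :=
    fun w => by rw [adj_ll, zero_mul]
  have h2 : ∀ j : Fin n2, adjMat ((B1 n1 n2 κ)ᶜ) (.inl u) (.inr j) * x (.inr j)
      = (if ((u:ℕ) = (j:ℕ) ∧ (u:ℕ) < κ) then (0:ℝ) else 1) * x (.inr j) :=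
    fun j => by rw [adj_lr]
  rw [Finset.sum_congr rfl fun w _ => h1 w, Finset.sum_congr rfl fun j _ => h2 j,
    sum_except hκ2 (u:ℕ) (fun j => x (.inr j))]
  simp

lemma mulVec_inr {n1 n2 κ : ℕ} (hκ1 : κ ≤ n1) (x : Fin n1 ⊕ Fin n2 → ℝ) (v : Fin n2) :
    (adjMat ((B1 n1 n2 κ)ᶜ)).mulVec x (.inr v)
      = (∑ u : Fin n1, x (.inl u))
        - (if h : (v:ℕ) < κ then x (.inl ⟨v, lt_of_lt_of_le h hκ1⟩) else 0) := by
  simp only [Matrix.mulVec, dotProduct, Fintype.sum_sum_type]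
  have h1 : ∀ w : Fin n2, adjMat ((B1 n1 n2 κ)ᶜ) (.inr v) (.inr w) * x (.inr w) = 0 :=
    fun w => by rw [adj_rr, zero_mul]
  have h2 : ∀ u : Fin n1, adjMat ((B1 n1 n2 κ)ᶜ) (.inr v) (.inl u) * x (.inl u)
      = (if ((u:ℕ) = (v:ℕ) ∧ (u:ℕ) < κ) then (0:ℝ) else 1) * x (.inl u) :=
    fun u => by rw [adj_rl]
  rw [Finset.sum_congr rfl fun w _ => h1 w, Finset.sum_congr rfl fun u _ => h2 u,
    sum_except' hκ1 (v:ℕ) (fun u => x (.inl u))]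
  simp

lemma sum_class {m κ : ℕ} (hκ : κ ≤ m) (a b : ℝ) :
    ∑ j : Fin m, (if (j:ℕ) < κ then a else b) = κ * a + ((m:ℝ) - κ) * b := by
  rw [Fin.sum_univ_eq_sum_range (fun j => if j < κ then a else b), Finset.range_eq_Ico,
    ← Finset.sum_Ico_consecutive _ (Nat.zero_le κ) hκ]
  rw [Finset.sum_congr rfl (fun j hj => if_pos (Finset.mem_Ico.mp hj).2)]
  rw [Finset.sum_congr rfl (fun j hj => if_neg (not_lt.mpr (Finset.mem_Ico.mp hj).1))]
  simp [Nat.cast_sub hκ]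


noncomputable def lamR (a b k : ℝ) : ℝ :=
  ((a*b - 2*k + 1) + Real.sqrt ((a*b - 2*k + 1)^2 - 4*((a-k)*(b-k))))/2

lemma lam_facts (T D : ℝ) (hT : 2 ≤ T) (hD : D + 1 < T) :
    1 < (T + Real.sqrt (T^2 - 4*D))/2 ∧
    ((T + Real.sqrt (T^2 - 4*D))/2)^2 - T*((T + Real.sqrt (T^2 - 4*D))/2) + D = 0 ∧
    (∀ ν : ℝ, ν^2 - T*ν + D = 0 → ν ≤ (T + Real.sqrt (T^2 - 4*D))/2) := by
  have hΔ' : (T-2)^2 < T^2 - 4*D := by nlinarith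
  have hΔ0 : (0:ℝ) ≤ T^2 - 4*D := le_of_lt (lt_of_le_of_lt (sq_nonneg _) hΔ')
  have hs : Real.sqrt (T^2 - 4*D) ^ 2 = T^2 - 4*D := Real.sq_sqrt hΔ0
  have h1 : T - 2 < Real.sqrt (T^2 - 4*D) := by
    have h := Real.sqrt_lt_sqrt (sq_nonneg (T-2)) hΔ'
    rwa [Real.sqrt_sq (by linarith : (0:ℝ) ≤ T - 2)] at h
  refine ⟨by linarith, by linear_combination (1/4 : ℝ) * hs, ?_⟩
  intro ν hν
  have h2 : (2*ν - T)^2 = T^2 - 4*D := by linear_combination 4*hν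
  have h3 : 2*ν - T ≤ Real.sqrt (T^2 - 4*D) :=
    calc 2*ν - T ≤ |2*ν - T| := le_abs_self _
      _ = Real.sqrt ((2*ν - T)^2) := (Real.sqrt_sq_eq_abs _).symm
      _ = Real.sqrt (T^2 - 4*D) := by rw [h2]
  linarith

lemma lam_mono (T D d : ℝ) (hT : 2 ≤ T) (hD : D + 1 < T) (hd : 0 < d) :
    (T + Real.sqrt (T^2 - 4*D))/2 < ((T+d) + Real.sqrt ((T+d)^2 - 4*(D+d)))/2 := by
  obtain ⟨hl1, hl2, _⟩ := lam_facts T D hT hD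
  set lam := (T + Real.sqrt (T^2 - 4*D))/2 with hlam
  have key : (2*lam - (T+d))^2 < (T+d)^2 - 4*(D+d) := by nlinarith [mul_pos hd (by linarith : (0:ℝ) < lam - 1)]
  have h0 : (0:ℝ) ≤ (T+d)^2 - 4*(D+d) := le_of_lt (lt_of_le_of_lt (sq_nonneg _) key)
  have h3 : 2*lam - (T+d) < Real.sqrt ((T+d)^2 - 4*(D+d)) := by
    calc 2*lam - (T+d) ≤ |2*lam - (T+d)| := le_abs_self _
      _ = Real.sqrt ((2*lam - (T+d))^2) := (Real.sqrt_sq_eq_abs _).symm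
      _ < Real.sqrt ((T+d)^2 - 4*(D+d)) := Real.sqrt_lt_sqrt (sq_nonneg _) key
  linarith

lemma TD_facts (n1 n2 κ : ℕ) (h1 : 1 ≤ κ) (h2 : κ ≤ n2) (h3 : κ < n1) (h4 : 2*κ + 2 ≤ n1 + n2) :
    2 ≤ ((n1:ℝ)*(n2:ℝ) - 2*(κ:ℝ) + 1) ∧ ((n1:ℝ)-(κ:ℝ))*((n2:ℝ)-(κ:ℝ)) + 1 < ((n1:ℝ)*(n2:ℝ) - 2*(κ:ℝ) + 1) := by
  have c1 : (1:ℝ) ≤ (κ:ℝ) := by exact_mod_cast h1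
  have c2 : (κ:ℝ) ≤ (n2:ℝ) := by exact_mod_cast h2
  have c3 : (κ:ℝ) + 1 ≤ (n1:ℝ) := by exact_mod_cast h3
  have c4 : 2*(κ:ℝ) + 2 ≤ (n1:ℝ) + (n2:ℝ) := by exact_mod_cast h4
  constructor
  · nlinarith [mul_nonneg (by linarith : (0:ℝ) ≤ (n1:ℝ) - (κ:ℝ) - 1) (by linarith : (0:ℝ) ≤ (n2:ℝ) - (κ:ℝ))]
  · nlinarith

lemma mem_spec (n1 n2 κ : ℕ) (h1 : 1 ≤ κ) (h2 : κ < n2) (h3 : κ < n1) :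
    (-Real.sqrt (lamR n1 n2 κ)) ∈ {μ : ℝ | ∃ x : (Fin n1 ⊕ Fin n2) → ℝ, x ≠ 0 ∧
      (adjMat ((B1 n1 n2 κ)ᶜ)).mulVec x = μ • x} := by
  have c1 : (1:ℝ) ≤ (κ:ℝ) := by exact_mod_cast h1
  have c2 : (κ:ℝ) + 1 ≤ (n2:ℝ) := by exact_mod_cast h2
  have c3 : (κ:ℝ) + 1 ≤ (n1:ℝ) := by exact_mod_cast h3
  obtain ⟨hT, hD⟩ := TD_facts n1 n2 κ h1 (le_of_lt h2) h3 (by omega)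
  obtain ⟨hl1, hl2, _⟩ := lam_facts _ _ hT hD
  set a : ℝ := (n1:ℝ)
  set b : ℝ := (n2:ℝ)
  set k : ℝ := (κ:ℝ)
  have hlamR : lamR a b k = ((a*b - 2*k + 1) + Real.sqrt ((a*b - 2*k + 1)^2 - 4*((a-k)*(b-k))))/2 := rfl
  set lam : ℝ := lamR a b k with hlamdef
  rw [← hlamR] at hl1 hl2
  have hlam0 : (0:ℝ) < lam := by linarith
  have hsqrtpos : 0 < Real.sqrt lam := Real.sqrt_pos.mpr hlam0
  set μ : ℝ := -Real.sqrt lam with hμdef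
  have hμ0 : μ ≠ 0 := by simp [hμdef]; linarith
  have hsq : μ^2 = lam := by
    rw [hμdef, neg_pow, Real.sq_sqrt (le_of_lt hlam0)]; ring
  set p : ℝ := (a-k)*(b-1) with hpdef
  set q : ℝ := lam - ((k-1)^2 + k*(b-k)) with hqdef
  set r : ℝ := ((k-1)*p + (a-k)*q)/μ with hrdef
  set t : ℝ := (k*p + (a-k)*q)/μ with htdef
  have hr : μ * r = (k-1)*p + (a-k)*q := by
    rw [hrdef, mul_comm, div_mul_cancel₀ _ hμ0]
  have ht : μ * t = k*p + (a-k)*q := by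
    rw [htdef, mul_comm, div_mul_cancel₀ _ hμ0]
  have hp0 : p ≠ 0 := by
    have : (0:ℝ) < p := by rw [hpdef]; nlinarith
    linarith
  refine ⟨Sum.elim (fun u : Fin n1 => if (u:ℕ) < κ then p else q)
      (fun v : Fin n2 => if (v:ℕ) < κ then r else t), ?_, ?_⟩
  · intro h0
    apply hp0
    have := congrFun h0 (Sum.inl ⟨0, lt_of_lt_of_le h1 (le_of_lt h3)⟩)
    have h01 : 0 < κ := h1
    simpa [h01] using this
  · funext z
    rcases z with u | v
    · rw [mulVec_inl (le_of_lt h2)]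
      have hsum : (∑ j : Fin n2, Sum.elim (fun u : Fin n1 => if (u:ℕ) < κ then p else q)
          (fun v : Fin n2 => if (v:ℕ) < κ then r else t) (Sum.inr j)) = k*r + (b-k)*t := by
        simp only [Sum.elim_inr]
        exact sum_class (le_of_lt h2) r t
      rw [hsum]
      simp only [Pi.smul_apply, Sum.elim_inl, smul_eq_mul]
      by_cases hu : (u:ℕ) < κ
      · rw [dif_pos hu, if_pos hu]
        simp only [Sum.elim_inr]
        rw [if_pos (show ((⟨(u:ℕ), lt_of_lt_of_le hu (le_of_lt h2)⟩ : Fin n2) : ℕ) < κ from hu)]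
        -- goal: k*r + (b-k)*t - r = μ * p
        apply mul_left_cancel₀ hμ0
        have e1 : μ*(k*r + (b-k)*t - r) = (k-1)*(μ*r) + (b-k)*(μ*t) := by ring
        rw [e1, hr, ht, hpdef, hqdef]
        linear_combination (-((a-k)*(b-1))) * hsq
      · rw [dif_neg hu, if_neg hu, sub_zero]
        -- goal: k*r + (b-k)*t = μ * q
        apply mul_left_cancel₀ hμ0
        have e1 : μ*(k*r + (b-k)*t) = k*(μ*r) + (b-k)*(μ*t) := by ring
        rw [e1, hr, ht, hpdef, hqdef]
        have hquad : lam^2 - (a*b - 2*k + 1)*lam + (a-k)*(b-k) = 0 := by linear_combination hl2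
        linear_combination (-1) * hquad + (-(lam - ((k-1)^2 + k*(b-k)))) * hsq
    · rw [mulVec_inr (le_of_lt h3)]
      have hsum : (∑ u : Fin n1, Sum.elim (fun u : Fin n1 => if (u:ℕ) < κ then p else q)
          (fun v : Fin n2 => if (v:ℕ) < κ then r else t) (Sum.inl u)) = k*p + (a-k)*q := by
        simp only [Sum.elim_inl]
        exact sum_class (le_of_lt h3) p q
      rw [hsum]
      simp only [Pi.smul_apply, Sum.elim_inr, smul_eq_mul]
      by_cases hv : (v:ℕ) < κ
      · rw [dif_pos hv, if_pos hv]
        simp only [Sum.elim_inl]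
        rw [if_pos (show ((⟨(v:ℕ), lt_of_lt_of_le hv (le_of_lt h3)⟩ : Fin n1) : ℕ) < κ from hv)]
        -- goal: k*p + (a-k)*q - p = μ * r
        linear_combination (-1) * hr
      · rw [dif_neg hv, if_neg hv, sub_zero]
        linear_combination (-1) * ht

lemma neg_sqrt_le (lam μ : ℝ) (h0 : 0 < lam) (hle : μ^2 ≤ lam) : -Real.sqrt lam ≤ μ := by
  nlinarith [Real.sq_sqrt h0.le, Real.sqrt_nonneg lam, sq_nonneg (μ + Real.sqrt lam)]

lemma lb_spec (n1 n2 κ : ℕ) (h1 : 1 ≤ κ) (h2 : κ ≤ n2) (h3 : κ < n1) (h4 : 2*κ+2 ≤ n1+n2) :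
    ∀ μ ∈ {μ : ℝ | ∃ x : (Fin n1 ⊕ Fin n2) → ℝ, x ≠ 0 ∧
      (adjMat ((B1 n1 n2 κ)ᶜ)).mulVec x = μ • x}, -Real.sqrt (lamR n1 n2 κ) ≤ μ := by
  obtain ⟨hT, hD⟩ := TD_facts n1 n2 κ h1 h2 h3 h4
  obtain ⟨hl1, hl2, hmax⟩ := lam_facts _ _ hT hD
  set a : ℝ := (n1:ℝ)
  set b : ℝ := (n2:ℝ)
  set k : ℝ := (κ:ℝ)
  have hlamR : lamR a b k = ((a*b - 2*k + 1) + Real.sqrt ((a*b - 2*k + 1)^2 - 4*((a-k)*(b-k))))/2 := rfl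
  set lam : ℝ := lamR a b k with hlamdef
  rw [← hlamR] at hl1 hl2 hmax
  have hlam0 : (0:ℝ) < lam := by linarith
  have hsqrt1 : 1 ≤ Real.sqrt lam := by
    have h := Real.sqrt_le_sqrt (le_of_lt hl1)
    rwa [Real.sqrt_one] at h
  have hsqrtpos : 0 < Real.sqrt lam := by linarith
  have hss : Real.sqrt lam ^ 2 = lam := Real.sq_sqrt (le_of_lt hlam0)
  rintro μ ⟨x, hx0, hx⟩
  by_cases hcase : μ^2 ≤ 1
  · nlinarith [sq_nonneg (μ+1)]
  · push_neg at hcase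
    have hμ0 : μ ≠ 0 := by
      intro h; rw [h] at hcase; norm_num at hcase
    have he : μ^2 - 1 ≠ 0 := by nlinarith
    set s1 : ℝ := ∑ u : Fin n1, x (Sum.inl u) with hs1def
    set s2 : ℝ := ∑ j : Fin n2, x (Sum.inr j) with hs2def
    have hEq1 : ∀ u : Fin n1, μ * x (Sum.inl u)
        = s2 - (if h : (u:ℕ) < κ then x (Sum.inr ⟨u, lt_of_lt_of_le h h2⟩) else 0) := by
      intro u
      have h := congrFun hx (Sum.inl u)
      rw [mulVec_inl h2] at h
      simpa using h.symm
    have hEq2 : ∀ v : Fin n2, μ * x (Sum.inr v)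
        = s1 - (if h : (v:ℕ) < κ then x (Sum.inl ⟨v, lt_of_lt_of_le h (le_of_lt h3)⟩) else 0) := by
      intro v
      have h := congrFun hx (Sum.inr v)
      rw [mulVec_inr (le_of_lt h3)] at h
      simpa using h.symm
    set p : ℝ := (μ*s2 - s1)/(μ^2-1) with hpdef
    set r : ℝ := (μ*s1 - s2)/(μ^2-1) with hrdef
    set q : ℝ := s2/μ with hqdef
    set t : ℝ := s1/μ with htdef
    have hxl : ∀ u : Fin n1, x (Sum.inl u) = if (u:ℕ) < κ then p else q := by
      intro u
      by_cases hu : (u:ℕ) < κ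
      · rw [if_pos hu]
        have e1 := hEq1 u
        rw [dif_pos hu] at e1
        have e2 := hEq2 ⟨u, lt_of_lt_of_le hu h2⟩
        rw [dif_pos (show ((⟨(u:ℕ), lt_of_lt_of_le hu h2⟩ : Fin n2) : ℕ) < κ from hu)] at e2
        have hfe : (⟨((⟨(u:ℕ), lt_of_lt_of_le hu h2⟩ : Fin n2) : ℕ), lt_of_lt_of_le hu (le_of_lt h3)⟩ : Fin n1) = u :=
          Fin.ext rfl
        rw [hfe] at e2
        rw [hpdef, eq_div_iff he]
        linear_combination μ*e1 - e2
      · rw [if_neg hu]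
        have e1 := hEq1 u
        rw [dif_neg hu] at e1
        rw [hqdef, eq_div_iff hμ0]
        linear_combination e1
    have hxr : ∀ v : Fin n2, x (Sum.inr v) = if (v:ℕ) < κ then r else t := by
      intro v
      by_cases hv : (v:ℕ) < κ
      · rw [if_pos hv]
        have e1 := hEq2 v
        rw [dif_pos hv] at e1
        have e2 := hEq1 ⟨v, lt_of_lt_of_le hv (le_of_lt h3)⟩
        rw [dif_pos (show ((⟨(v:ℕ), lt_of_lt_of_le hv (le_of_lt h3)⟩ : Fin n1) : ℕ) < κ from hv)] at e2
        have hfe : (⟨((⟨(v:ℕ), lt_of_lt_of_le hv (le_of_lt h3)⟩ : Fin n1) : ℕ), lt_of_lt_of_le hv h2⟩ : Fin n2) = v :=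
          Fin.ext rfl
        rw [hfe] at e2
        rw [hrdef, eq_div_iff he]
        linear_combination μ*e1 - e2
      · rw [if_neg hv]
        have e1 := hEq2 v
        rw [dif_neg hv] at e1
        rw [htdef, eq_div_iff hμ0]
        linear_combination e1
    have hs1 : s1 = k*p + (a-k)*q := by
      rw [hs1def, Finset.sum_congr rfl (fun u _ => hxl u)]
      exact sum_class (le_of_lt h3) p q
    have hs2 : s2 = k*r + (b-k)*t := by
      rw [hs2def, Finset.sum_congr rfl (fun v _ => hxr v)]
      exact sum_class h2 r t
    have hBq : μ * q = s2 := by rw [hqdef, mul_comm, div_mul_cancel₀ _ hμ0]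
    have hDt : μ * t = s1 := by rw [htdef, mul_comm, div_mul_cancel₀ _ hμ0]
    have hB : μ * q = k*r + (b-k)*t := by rw [hBq, hs2]
    have hD2 : μ * t = k*p + (a-k)*q := by rw [hDt, hs1]
    have hC' : μ * r = s1 - p := by
      rw [hrdef, hpdef]
      field_simp
      ring
    have hC : μ * r = (k-1)*p + (a-k)*q := by
      rw [hC']; linear_combination hs1
    have hA' : μ * p = s2 - r := by
      rw [hrdef, hpdef]
      field_simp
      ring
    have hA : μ * p = (k-1)*r + (b-k)*t := by
      rw [hA']; linear_combination hs2
    have hP : μ^2 * p = ((k-1)^2 + k*(b-k))*p + ((a-k)*(b-1))*q := by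
      linear_combination μ*hA + (k-1)*hC + (b-k)*hD2
    have hQ : μ^2 * q = (k*(b-1))*p + ((a-k)*b)*q := by
      linear_combination μ*hB + k*hC + (b-k)*hD2
    have hpq : p ≠ 0 ∨ q ≠ 0 := by
      by_contra hc
      push_neg at hc
      obtain ⟨hp0, hq0⟩ := hc
      have hs10 : s1 = 0 := by rw [hs1, hp0, hq0]; ring
      have hr0 : r = 0 := by
        have := hC
        rw [hp0, hq0] at this
        have h0 : μ * r = 0 := by linarith [this]
        exact (mul_eq_zero.mp h0).resolve_left hμ0
      have ht0 : t = 0 := by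
        have := hD2
        rw [hp0, hq0] at this
        have h0 : μ * t = 0 := by linarith [this]
        exact (mul_eq_zero.mp h0).resolve_left hμ0
      apply hx0
      funext z
      rcases z with u | v
      · rw [hxl u, hp0, hq0]; simp
      · rw [hxr v, hr0, ht0]; simp
    have hroot : (μ^2)^2 - (a*b - 2*k + 1)*(μ^2) + (a-k)*(b-k) = 0 := by
      rcases hpq with hp | hq
      · have hdet : ((μ^2)^2 - (a*b - 2*k + 1)*(μ^2) + (a-k)*(b-k)) * p = 0 := by
          linear_combination (μ^2 - (a-k)*b) * hP + ((a-k)*(b-1)) * hQ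
        exact (mul_eq_zero.mp hdet).resolve_right hp
      · have hdet : ((μ^2)^2 - (a*b - 2*k + 1)*(μ^2) + (a-k)*(b-k)) * q = 0 := by
          linear_combination (k*(b-1)) * hP + (μ^2 - ((k-1)^2 + k*(b-k))) * hQ
        exact (mul_eq_zero.mp hdet).resolve_right hq
    exact neg_sqrt_le lam μ hlam0 (hmax (μ^2) hroot)

lemma step (n1 n2 κ : ℕ) (hκ : 1 ≤ κ) (hn2 : κ ≤ n2) (h : n2 + 1 < n1) :
    minEig (adjMat ((B1 (n1 - 1) (n2 + 1) κ)ᶜ)) < minEig (adjMat ((B1 n1 n2 κ)ᶜ)) := by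
  have c1 : ((n1-1:ℕ):ℝ) = (n1:ℝ) - 1 := by
    rw [Nat.cast_sub (by omega : 1 ≤ n1)]; norm_num
  have c2 : ((n2+1:ℕ):ℝ) = (n2:ℝ) + 1 := by push_cast; ring
  obtain ⟨hT, hD⟩ := TD_facts n1 n2 κ hκ hn2 (by omega) (by omega)
  have hd : (0:ℝ) < (n1:ℝ) - (n2:ℝ) - 1 := by
    have : (n2:ℝ) + 2 ≤ (n1:ℝ) := by exact_mod_cast (by omega : n2+2 ≤ n1)
    linarith
  have hmono0 := lam_mono ((n1:ℝ)*(n2:ℝ) - 2*(κ:ℝ) + 1) (((n1:ℝ)-(κ:ℝ))*((n2:ℝ)-(κ:ℝ)))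
    ((n1:ℝ) - (n2:ℝ) - 1) hT hD hd
  have eq2 : lamR ((n1-1:ℕ):ℝ) ((n2+1:ℕ):ℝ) (κ:ℝ)
      = ((((n1:ℝ)*(n2:ℝ) - 2*(κ:ℝ) + 1) + ((n1:ℝ) - (n2:ℝ) - 1))
        + Real.sqrt (((((n1:ℝ)*(n2:ℝ) - 2*(κ:ℝ) + 1) + ((n1:ℝ) - (n2:ℝ) - 1)))^2
          - 4*((((n1:ℝ)-(κ:ℝ))*((n2:ℝ)-(κ:ℝ))) + ((n1:ℝ) - (n2:ℝ) - 1))))/2 := by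
    rw [lamR, c1, c2]
    rw [show ((n1:ℝ)-1)*((n2:ℝ)+1) - 2*(κ:ℝ) + 1
        = (((n1:ℝ)*(n2:ℝ) - 2*(κ:ℝ) + 1) + ((n1:ℝ) - (n2:ℝ) - 1)) from by ring,
      show (((n1:ℝ)-1)-(κ:ℝ))*(((n2:ℝ)+1)-(κ:ℝ))
        = (((n1:ℝ)-(κ:ℝ))*((n2:ℝ)-(κ:ℝ))) + ((n1:ℝ) - (n2:ℝ) - 1) from by ring]
  have hmono : lamR (n1:ℝ) (n2:ℝ) (κ:ℝ) < lamR ((n1-1:ℕ):ℝ) ((n2+1:ℕ):ℝ) (κ:ℝ) := by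
    rw [eq2]; exact hmono0
  obtain ⟨hl1, _, _⟩ := lam_facts _ _ hT hD
  have hlam1 : 1 < lamR (n1:ℝ) (n2:ℝ) (κ:ℝ) := hl1
  obtain ⟨hT', hD'⟩ := TD_facts (n1-1) (n2+1) κ hκ (by omega) (by omega) (by omega)
  obtain ⟨hl1', _, _⟩ := lam_facts _ _ hT' hD'
  have hlam1' : 1 < lamR ((n1-1:ℕ):ℝ) ((n2+1:ℕ):ℝ) (κ:ℝ) := hl1'
  have hsqlt : Real.sqrt (lamR (n1:ℝ) (n2:ℝ) (κ:ℝ))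
      < Real.sqrt (lamR ((n1-1:ℕ):ℝ) ((n2+1:ℕ):ℝ) (κ:ℝ)) :=
    Real.sqrt_lt_sqrt (by linarith) hmono
  have hsqrt1' : 1 ≤ Real.sqrt (lamR ((n1-1:ℕ):ℝ) ((n2+1:ℕ):ℝ) (κ:ℝ)) := by
    have hx := Real.sqrt_le_sqrt (le_of_lt hlam1')
    rwa [Real.sqrt_one] at hx
  have hlb' := lb_spec (n1-1) (n2+1) κ hκ (by omega) (by omega) (by omega)
  have hmem' := mem_spec (n1-1) (n2+1) κ hκ (by omega) (by omega)
  have hlb := lb_spec n1 n2 κ hκ hn2 (by omega) (by omega)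
  rw [minEig, minEig]
  have h1' : sInf {μ : ℝ | ∃ x : (Fin (n1-1) ⊕ Fin (n2+1)) → ℝ, x ≠ 0 ∧
      (adjMat ((B1 (n1-1) (n2+1) κ)ᶜ)).mulVec x = μ • x}
      ≤ -Real.sqrt (lamR ((n1-1:ℕ):ℝ) ((n2+1:ℕ):ℝ) (κ:ℝ)) :=
    csInf_le ⟨_, hlb'⟩ hmem'
  by_cases hne : {μ : ℝ | ∃ x : (Fin n1 ⊕ Fin n2) → ℝ, x ≠ 0 ∧
      (adjMat ((B1 n1 n2 κ)ᶜ)).mulVec x = μ • x}.Nonempty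
  · have h2 := le_csInf hne hlb
    linarith
  · rw [Set.not_nonempty_iff_eq_empty.mp hne, Real.sInf_empty]
    linarith

lemma part2aux (n κ : ℕ) (hκ : 1 ≤ κ) : ∀ n1 n2 : ℕ, n1 + n2 = n → κ ≤ n2 → n2 ≤ n1 →
    minEig (adjMat ((B1 (n - n / 2) (n / 2) κ)ᶜ)) ≤ minEig (adjMat ((B1 n1 n2 κ)ᶜ)) := by
  intro n1
  induction n1 using Nat.strong_induction_on with
  | _ n1 ih =>
    intro n2 hsum hk2 hle
    by_cases h : n2 + 1 < n1
    · have hstep := step n1 n2 κ hκ hk2 h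
      have hih := ih (n1-1) (by omega) (n2+1) (by omega) (by omega) (by omega)
      linarith
    · have e1 : n - n / 2 = n1 := by omega
      have e2 : n / 2 = n2 := by omega
      rw [e1, e2]

/-- For `n1 > n2 + 1 ≥ κ + 1`, the least eigenvalue of the complement of `B1(n1, n2; κ)`
is strictly greater than that of the complement of `B1(n1−1, n2+1; κ)`. Consequently,
with `n1 + n2 = n` fixed and `n1 ≥ n2 ≥ κ`, the least eigenvalue of the complement is
minimized at `(n1, n2) = (⌈n/2⌉, ⌊n/2⌋)`. -/
theorem minEig_compl_B1_balanced_min (n κ : ℕ) (hκ : 1 ≤ κ) :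
    (∀ n1 n2 : ℕ, κ ≤ n2 → n2 + 1 < n1 →
      minEig (adjMat ((B1 (n1 - 1) (n2 + 1) κ)ᶜ)) < minEig (adjMat ((B1 n1 n2 κ)ᶜ))) ∧
    (∀ n1 n2 : ℕ, n1 + n2 = n → κ ≤ n2 → n2 ≤ n1 →
      minEig (adjMat ((B1 (n - n / 2) (n / 2) κ)ᶜ)) ≤ minEig (adjMat ((B1 n1 n2 κ)ᶜ))) := by
  exact ⟨fun n1 n2 h1 h2 => step n1 n2 κ hκ h1 h2,
    fun n1 n2 h1 h2 h3 => part2aux n κ hκ n1 n2 h1 h2 h3⟩
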